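/- Let 𝓜 be a finite set of nonsingular n×n real matrices and suppose there exist unit vectors z^{(1)}, z^{(2)} with ρ̃_{z^{(1)}}(𝓜) < ρ̃_{z^{(2)}}(𝓜). Then the function x ↦ ρ̃_x(𝓜) is discontinuous at every point of the cone D = { λ w : λ > 0, w ∈ clos(O⁻(z^{(1)})) ∩ clos(O⁺(z^{(2)})) }. -/

import Mathlib

open Real MeasureTheory

noncomputable def appE {n : ℕ} (A : Matrix (Fin n) (Fin n) ℝ) (x : EuclideanSpace ℝ (Fin n)) :
    EuclideanSpace ℝ (Fin n) :=
  Matrix.toEuclideanLin A x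

def IsTraj {n : ℕ} (M : Set (Matrix (Fin n) (Fin n) ℝ)) (x : ℕ → EuclideanSpace ℝ (Fin n)) : Prop :=
  ∀ k : ℕ, ∃ A ∈ M, x (k + 1) = appE A (x k)

noncomputable def stabRadius {n : ℕ} (M : Set (Matrix (Fin n) (Fin n) ℝ)) : ℝ :=
  sInf {l : ℝ | 0 ≤ l ∧ ∃ C > (0:ℝ), ∀ x0 : EuclideanSpace ℝ (Fin n),
    ∃ x : ℕ → EuclideanSpace ℝ (Fin n), x 0 = x0 ∧ IsTraj M x ∧
      ∀ k : ℕ, ‖x k‖ ≤ C * l ^ k * ‖x0‖}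

noncomputable def stabRadiusAt {n : ℕ} (M : Set (Matrix (Fin n) (Fin n) ℝ))
    (x0 : EuclideanSpace ℝ (Fin n)) : ℝ :=
  sInf {l : ℝ | 0 ≤ l ∧ ∃ x : ℕ → EuclideanSpace ℝ (Fin n), x 0 = x0 ∧ IsTraj M x ∧
    ∃ C > (0:ℝ), ∀ k : ℕ, ‖x k‖ ≤ C * l ^ k * ‖x0‖}

def OPlus {n : ℕ} (M : Set (Matrix (Fin n) (Fin n) ℝ)) (z : EuclideanSpace ℝ (Fin n)) :
    Set (EuclideanSpace ℝ (Fin n)) :=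
  {w | ∃ l : List (Matrix (Fin n) (Fin n) ℝ), (∀ B ∈ l, B ∈ M) ∧
    w = ‖appE l.prod z‖⁻¹ • appE l.prod z}

def OMinus {n : ℕ} (M : Set (Matrix (Fin n) (Fin n) ℝ)) (z : EuclideanSpace ℝ (Fin n)) :
    Set (EuclideanSpace ℝ (Fin n)) :=
  {w | ∃ l : List (Matrix (Fin n) (Fin n) ℝ), (∀ B ∈ l, B ∈ M) ∧
    w = ‖appE l.prod⁻¹ z‖⁻¹ • appE l.prod⁻¹ z}

theorem appE_smul {n : ℕ} (A : Matrix (Fin n) (Fin n) ℝ) (c : ℝ) (x : EuclideanSpace ℝ (Fin n)) :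
    appE A (c • x) = c • appE A x := by simp [appE]

def Sset {n : ℕ} (M : Set (Matrix (Fin n) (Fin n) ℝ)) (x0 : EuclideanSpace ℝ (Fin n)) : Set ℝ :=
  {l : ℝ | 0 ≤ l ∧ ∃ x : ℕ → EuclideanSpace ℝ (Fin n), x 0 = x0 ∧ IsTraj M x ∧
    ∃ C > (0:ℝ), ∀ k : ℕ, ‖x k‖ ≤ C * l ^ k * ‖x0‖}

theorem stabRadiusAt_eq {n : ℕ} (M : Set (Matrix (Fin n) (Fin n) ℝ))
    (x0 : EuclideanSpace ℝ (Fin n)) : stabRadiusAt M x0 = sInf (Sset M x0) := rfl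

theorem Sset_bdd {n : ℕ} (M : Set (Matrix (Fin n) (Fin n) ℝ)) (x0 : EuclideanSpace ℝ (Fin n)) :
    BddBelow (Sset M x0) := ⟨0, fun _ hl => hl.1⟩

theorem Sset_smul_subset {n : ℕ} (M : Set (Matrix (Fin n) (Fin n) ℝ))
    (x0 : EuclideanSpace ℝ (Fin n)) (c : ℝ) : Sset M x0 ⊆ Sset M (c • x0) := by
  rintro l ⟨hl0, x, hx0, hxt, C, hC, hbd⟩
  refine ⟨hl0, fun k => c • x k, by simp [hx0], ?_, C, hC, ?_⟩
  · intro k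
    obtain ⟨A, hA, hAe⟩ := hxt k
    refine ⟨A, hA, ?_⟩
    show c • x (k+1) = appE A (c • x k)
    rw [hAe, appE_smul]
  · intro k
    show ‖c • x k‖ ≤ _
    rw [norm_smul, norm_smul]
    calc ‖c‖ * ‖x k‖ ≤ ‖c‖ * (C * l ^ k * ‖x0‖) :=
          mul_le_mul_of_nonneg_left (hbd k) (norm_nonneg c)
      _ = C * l ^ k * (‖c‖ * ‖x0‖) := by ring

theorem Sset_smul {n : ℕ} (M : Set (Matrix (Fin n) (Fin n) ℝ))
    (x0 : EuclideanSpace ℝ (Fin n)) {c : ℝ} (hc : c ≠ 0) : Sset M (c • x0) = Sset M x0 := by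
  apply Set.Subset.antisymm
  · have := Sset_smul_subset M (c • x0) c⁻¹
    rwa [inv_smul_smul₀ hc] at this
  · exact Sset_smul_subset M x0 c

theorem stabRadiusAt_smul {n : ℕ} (M : Set (Matrix (Fin n) (Fin n) ℝ))
    (x0 : EuclideanSpace ℝ (Fin n)) {c : ℝ} (hc : c ≠ 0) :
    stabRadiusAt M (c • x0) = stabRadiusAt M x0 := by
  rw [stabRadiusAt_eq, stabRadiusAt_eq, Sset_smul M x0 hc]

theorem Sset_nonempty {n : ℕ} {M : Set (Matrix (Fin n) (Fin n) ℝ)} (hMne : M.Nonempty)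
    (x0 : EuclideanSpace ℝ (Fin n)) : (Sset M x0).Nonempty := by
  obtain ⟨A0, hA0⟩ := hMne
  set L : EuclideanSpace ℝ (Fin n) →L[ℝ] EuclideanSpace ℝ (Fin n) :=
    LinearMap.toContinuousLinearMap (Matrix.toEuclideanLin A0) with hL
  have hLn : (0:ℝ) ≤ ‖L‖ := norm_nonneg L
  refine ⟨‖L‖ + 1, by linarith, fun k => (appE A0)^[k] x0, by simp, ?_, 1, one_pos, ?_⟩
  · intro k
    refine ⟨A0, hA0, ?_⟩
    show (appE A0)^[k+1] x0 = appE A0 ((appE A0)^[k] x0)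
    rw [Function.iterate_succ_apply']
  · intro k
    show ‖(appE A0)^[k] x0‖ ≤ _
    induction k with
    | zero =>
      simp only [Function.iterate_zero, id_eq, pow_zero, mul_one, one_mul]
      exact le_rfl
    | succ k ih =>
      rw [Function.iterate_succ_apply']
      have h1 : ‖appE A0 ((appE A0)^[k] x0)‖ ≤ ‖L‖ * ‖(appE A0)^[k] x0‖ := L.le_opNorm _
      have h2 : (0:ℝ) ≤ ‖L‖ := norm_nonneg L
      have h3 : (0:ℝ) ≤ (‖L‖ + 1) ^ k := by positivity

      calc ‖appE A0 ((appE A0)^[k] x0)‖ ≤ ‖L‖ * ‖(appE A0)^[k] x0‖ := h1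
        _ ≤ ‖L‖ * (1 * (‖L‖ + 1) ^ k * ‖x0‖) :=
            mul_le_mul_of_nonneg_left ih h2
        _ ≤ 1 * (‖L‖ + 1) ^ (k + 1) * ‖x0‖ := by
            rw [pow_succ]
            nlinarith [norm_nonneg x0]

theorem appE_one' {n : ℕ} (x : EuclideanSpace ℝ (Fin n)) : appE 1 x = x := by
  simp [appE, Matrix.toEuclideanLin_eq_toLin]

theorem appE_mul' {n : ℕ} (A B : Matrix (Fin n) (Fin n) ℝ) (x : EuclideanSpace ℝ (Fin n)) :
    appE (A * B) x = appE A (appE B x) := by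
  simp [appE, Matrix.toEuclideanLin_eq_toLin, Matrix.toLin_mul _ (PiLp.basisFun 2 ℝ (Fin n))]

theorem appE_zero' {n : ℕ} (A : Matrix (Fin n) (Fin n) ℝ) :
    appE A (0 : EuclideanSpace ℝ (Fin n)) = 0 := by simp [appE]

theorem appE_inv_cancel' {n : ℕ} {A : Matrix (Fin n) (Fin n) ℝ} (hA : A.det ≠ 0)
    (x : EuclideanSpace ℝ (Fin n)) : appE A⁻¹ (appE A x) = x := by
  rw [← appE_mul', Matrix.nonsing_inv_mul A (by simpa using hA), appE_one']

theorem Sset_pos {n : ℕ} {M : Set (Matrix (Fin n) (Fin n) ℝ)} (hM : ∀ A ∈ M, A.det ≠ 0)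
    {x0 : EuclideanSpace ℝ (Fin n)} (hx0 : x0 ≠ 0) {l : ℝ} (hl : l ∈ Sset M x0) : 0 < l := by
  obtain ⟨hl0, x, hxz, hxt, C, hC, hbd⟩ := hl
  rcases hl0.lt_or_eq with h | h
  · exact h
  exfalso
  obtain ⟨A, hA, hAe⟩ := hxt 0
  have h1 : ‖x 1‖ ≤ 0 := by
    have := hbd 1
    rw [← h] at this
    simpa using this
  have hx1 : x 1 = 0 := norm_le_zero_iff.mp h1
  have : appE A (x 0) ≠ 0 := by
    rw [hxz]
    intro hz
    apply hx0
    have := appE_inv_cancel' (hM A hA) x0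
    rw [hz, appE_zero'] at this
    exact this.symm
  exact this (hAe ▸ hx1)

theorem chain_le {n : ℕ} {M : Set (Matrix (Fin n) (Fin n) ℝ)} (hM : ∀ A ∈ M, A.det ≠ 0)
    (hMne : M.Nonempty) {a b : EuclideanSpace ℝ (Fin n)} (ha : ‖a‖ = 1) (hb : ‖b‖ = 1)
    {c : ℝ} (hc : 0 < c) {m : ℕ} {u : ℕ → EuclideanSpace ℝ (Fin n)}
    (hu0 : u 0 = a) (hum : u m = c • b)
    (hstep : ∀ k < m, ∃ A ∈ M, u (k + 1) = appE A (u k)) :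
    stabRadiusAt M a ≤ stabRadiusAt M b := by
  rw [stabRadiusAt_eq, stabRadiusAt_eq]
  apply csInf_le_csInf (Sset_bdd M a) (Sset_nonempty hMne b)
  rintro l ⟨hl0, x, hx0, hxt, C, hC, hbd⟩
  have hbne : b ≠ 0 := by intro h; rw [h] at hb; simp at hb
  have hlpos : 0 < l := Sset_pos hM hbne ⟨hl0, x, hx0, hxt, C, hC, hbd⟩
  set y : ℕ → EuclideanSpace ℝ (Fin n) := fun k => if k < m then u k else c • x (k - m) with hy
  have hyk_ge : ∀ k, m ≤ k → y k = c • x (k - m) := by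
    intro k hk; simp [hy, Nat.not_lt.mpr hk]
  have hyk_lt : ∀ k, k < m → y k = u k := fun k hk => by simp [hy, hk]
  have hy0 : y 0 = a := by
    by_cases h : 0 < m
    · rw [hyk_lt 0 h, hu0]
    · have hm0 : m = 0 := Nat.eq_zero_of_not_pos h
      have hab : a = c • b := by rw [← hu0]; exact hm0 ▸ hum
      rw [hyk_ge 0 (by omega)]
      simp [hx0, ← hab]
  have hyk_m : y m = c • b := by rw [hyk_ge m le_rfl]; simp [hx0]
  have hytraj : IsTraj M y := by
    intro k
    by_cases hk : k < m
    · obtain ⟨A, hA, hAe⟩ := hstep k hk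
      refine ⟨A, hA, ?_⟩
      rw [hyk_lt k hk]
      by_cases hk1 : k + 1 < m
      · rw [hyk_lt _ hk1, hAe]
      · have hkm : k + 1 = m := by omega
        rw [hkm, hyk_m, ← hum, ← hkm, hAe]
    · obtain ⟨A, hA, hAe⟩ := hxt (k - m)
      refine ⟨A, hA, ?_⟩
      have hkm : m ≤ k := Nat.not_lt.mp hk
      rw [hyk_ge k hkm, hyk_ge (k+1) (by omega)]
      have hidx : k + 1 - m = (k - m) + 1 := by omega
      rw [hidx, hAe, appE_smul]
  set C' : ℝ := (∑ j ∈ Finset.range m, ‖u j‖ * l⁻¹ ^ j) + c * C * l⁻¹ ^ m + 1 with hC'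
  have hsum_nonneg : ∀ j ∈ Finset.range m, (0:ℝ) ≤ ‖u j‖ * l⁻¹ ^ j := by
    intro j _; positivity
  have hC'pos : 0 < C' := by
    have h1 : (0:ℝ) ≤ ∑ j ∈ Finset.range m, ‖u j‖ * l⁻¹ ^ j := Finset.sum_nonneg hsum_nonneg
    have h2 : (0:ℝ) ≤ c * C * l⁻¹ ^ m := by positivity
    rw [hC']; linarith
  refine ⟨hl0, y, hy0, hytraj, C', hC'pos, ?_⟩
  intro k
  rw [ha, mul_one]
  have hlk : (0:ℝ) < l ^ k := pow_pos hlpos k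
  by_cases hk : k < m
  · rw [hyk_lt k hk]
    have h1 : ‖u k‖ * l⁻¹ ^ k ≤ ∑ j ∈ Finset.range m, ‖u j‖ * l⁻¹ ^ j :=
      Finset.single_le_sum hsum_nonneg (Finset.mem_range.mpr hk)
    have h2 : ‖u k‖ * l⁻¹ ^ k ≤ C' := by
      have h3 : (0:ℝ) ≤ c * C * l⁻¹ ^ m := by positivity
      rw [hC']; linarith
    calc ‖u k‖ = ‖u k‖ * l⁻¹ ^ k * l ^ k := by
          rw [mul_assoc, inv_pow, inv_mul_cancel₀ (ne_of_gt hlk), mul_one]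
      _ ≤ C' * l ^ k := mul_le_mul_of_nonneg_right h2 hlk.le
  · have hkm : m ≤ k := Nat.not_lt.mp hk
    rw [hyk_ge k hkm, norm_smul, Real.norm_eq_abs, abs_of_pos hc]
    have h1 : ‖x (k-m)‖ ≤ C * l ^ (k-m) * ‖b‖ := hbd (k-m)
    rw [hb, mul_one] at h1
    have h2 : c * C * l⁻¹ ^ m ≤ C' := by
      have h3 : (0:ℝ) ≤ ∑ j ∈ Finset.range m, ‖u j‖ * l⁻¹ ^ j := Finset.sum_nonneg hsum_nonneg
      rw [hC']; linarith
    have hpow : l⁻¹ ^ m * l ^ k = l ^ (k - m) := by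
      rw [show l ^ k = l ^ (k-m) * l ^ m from by rw [← pow_add]; congr 1; omega, inv_pow,
        mul_comm (l ^ (k-m)) (l ^ m), ← mul_assoc,
        inv_mul_cancel₀ (pow_ne_zero m (ne_of_gt hlpos)), one_mul]
    calc c * ‖x (k-m)‖ ≤ c * (C * l ^ (k-m)) := mul_le_mul_of_nonneg_left h1 hc.le
      _ = (c * C * l⁻¹ ^ m) * l ^ k := by rw [← hpow]; ring
      _ ≤ C' * l ^ k := mul_le_mul_of_nonneg_right h2 hlk.le

theorem appE_cancel_inv' {n : ℕ} {A : Matrix (Fin n) (Fin n) ℝ} (hA : A.det ≠ 0)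
    (x : EuclideanSpace ℝ (Fin n)) : appE A (appE A⁻¹ x) = x := by
  rw [← appE_mul', Matrix.mul_nonsing_inv A (by simpa using hA), appE_one']

theorem det_list_prod_ne {n : ℕ} {M : Set (Matrix (Fin n) (Fin n) ℝ)}
    (hM : ∀ A ∈ M, A.det ≠ 0) (l : List (Matrix (Fin n) (Fin n) ℝ)) (hl : ∀ B ∈ l, B ∈ M) :
    l.prod.det ≠ 0 := by
  induction l with
  | nil => simp
  | cons a t ih =>
    simp only [List.prod_cons, Matrix.det_mul]
    exact mul_ne_zero (hM a (hl a (by simp))) (ih (fun B hB => hl B (by simp [hB])))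

theorem stab_le_of_OMinus {n : ℕ} {M : Set (Matrix (Fin n) (Fin n) ℝ)}
    (hM : ∀ A ∈ M, A.det ≠ 0) (hMne : M.Nonempty) {z1 w : EuclideanSpace ℝ (Fin n)}
    (hz1 : ‖z1‖ = 1) (hw : w ∈ OMinus M z1) :
    stabRadiusAt M w ≤ stabRadiusAt M z1 := by
  obtain ⟨lst, hlst, hwv⟩ := hw
  have hz1ne : z1 ≠ 0 := by intro h; rw [h] at hz1; simp at hz1
  have hdet : lst.prod.det ≠ 0 := det_list_prod_ne hM lst hlst
  set v : EuclideanSpace ℝ (Fin n) := appE lst.prod⁻¹ z1 with hv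
  have hvne : v ≠ 0 := by
    intro h
    apply hz1ne
    have h2 := appE_cancel_inv' hdet z1
    rw [← hv, h, appE_zero'] at h2
    exact h2.symm
  set c : ℝ := ‖v‖⁻¹ with hc
  have hcpos : 0 < c := inv_pos.mpr (norm_pos_iff.mpr hvne)
  have hwc : w = c • v := hwv
  have hw1 : ‖w‖ = 1 := by
    rw [hwc, norm_smul, hc, Real.norm_eq_abs, abs_of_pos hcpos,
      inv_mul_cancel₀ (norm_ne_zero_iff.mpr hvne)]
  set m : ℕ := lst.length with hm
  set u : ℕ → EuclideanSpace ℝ (Fin n) :=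
    fun k => c • appE ((lst.take (m - k)).prod)⁻¹ z1 with hu
  have hu0 : u 0 = w := by
    rw [hu]
    simp only [Nat.sub_zero, hm, List.take_length]
    rw [hwc, hv]
  have hum : u m = c • z1 := by
    rw [hu]
    simp only [Nat.sub_self, List.take_zero, List.prod_nil, inv_one, appE_one']
  have hstep : ∀ k < m, ∃ A ∈ M, u (k + 1) = appE A (u k) := by
    intro k hk
    have hi : m - k - 1 < lst.length := by omega
    set A : Matrix (Fin n) (Fin n) ℝ := lst.get ⟨m - k - 1, hi⟩ with hA
    refine ⟨A, hlst A (lst.get_mem ⟨m - k - 1, hi⟩), ?_⟩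
    have htake : lst.take (m - k) = lst.take (m - k - 1) ++ [A] := by
      have h1 : m - k = (m - k - 1) + 1 := by omega
      rw [h1, List.take_succ]
      simp [List.getElem?_eq_getElem hi, hA]
    have hprod : ((lst.take (m - k)).prod)⁻¹ = A⁻¹ * ((lst.take (m - k - 1)).prod)⁻¹ := by
      rw [htake, List.prod_append, List.prod_singleton, Matrix.mul_inv_rev]
    have hk1 : m - (k + 1) = m - k - 1 := by omega
    rw [hu]
    simp only [hk1]
    rw [hprod, appE_mul', appE_smul, appE_cancel_inv' (hM A (hlst A (lst.get_mem ⟨m - k - 1, hi⟩)))]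
  exact chain_le hM hMne hw1 hz1 hcpos hu0 hum hstep

theorem stab_ge_of_OPlus {n : ℕ} {M : Set (Matrix (Fin n) (Fin n) ℝ)}
    (hM : ∀ A ∈ M, A.det ≠ 0) (hMne : M.Nonempty) {z2 w : EuclideanSpace ℝ (Fin n)}
    (hz2 : ‖z2‖ = 1) (hw : w ∈ OPlus M z2) :
    stabRadiusAt M z2 ≤ stabRadiusAt M w := by
  obtain ⟨lst, hlst, hwv⟩ := hw
  have hz2ne : z2 ≠ 0 := by intro h; rw [h] at hz2; simp at hz2
  have hdet : lst.prod.det ≠ 0 := det_list_prod_ne hM lst hlst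
  set v : EuclideanSpace ℝ (Fin n) := appE lst.prod z2 with hv
  have hvne : v ≠ 0 := by
    intro h
    apply hz2ne
    have h2 := appE_inv_cancel' hdet z2
    rw [← hv, h, appE_zero'] at h2
    exact h2.symm
  have hwc : w = ‖v‖⁻¹ • v := hwv
  have hvnorm : ‖v‖ ≠ 0 := norm_ne_zero_iff.mpr hvne
  have hcpos : (0:ℝ) < ‖v‖ := norm_pos_iff.mpr hvne
  have hw1 : ‖w‖ = 1 := by
    rw [hwc, norm_smul, Real.norm_eq_abs, abs_of_pos (inv_pos.mpr hcpos),
      inv_mul_cancel₀ hvnorm]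
  set m : ℕ := lst.length with hm
  set u : ℕ → EuclideanSpace ℝ (Fin n) := fun k => appE ((lst.drop (m - k)).prod) z2 with hu
  have hu0 : u 0 = z2 := by
    rw [hu]
    simp only [Nat.sub_zero, hm, List.drop_length, List.prod_nil, appE_one']
  have hum : u m = ‖v‖ • w := by
    rw [hu]
    simp only [Nat.sub_self, List.drop_zero]
    rw [hwc, smul_smul, mul_inv_cancel₀ hvnorm, one_smul, hv]
  have hstep : ∀ k < m, ∃ A ∈ M, u (k + 1) = appE A (u k) := by
    intro k hk
    have hi : m - k - 1 < lst.length := by omega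
    set A : Matrix (Fin n) (Fin n) ℝ := lst.get ⟨m - k - 1, hi⟩ with hA
    refine ⟨A, hlst A (lst.get_mem ⟨m - k - 1, hi⟩), ?_⟩
    have hdrop : lst.drop (m - k - 1) = A :: lst.drop (m - k) := by
      have h1 : m - k = (m - k - 1) + 1 := by omega
      rw [h1, Nat.add_sub_cancel, List.drop_eq_getElem_cons hi]
      simp [hA]
    have hk1 : m - (k + 1) = m - k - 1 := by omega
    rw [hu]
    simp only [hk1]
    rw [hdrop, List.prod_cons, appE_mul']
  exact chain_le hM hMne hz2 hw1 hcpos hu0 hum hstep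

theorem stmt16 {n : ℕ} (M : Set (Matrix (Fin n) (Fin n) ℝ)) (hfin : M.Finite)
    (hM : ∀ A ∈ M, A.det ≠ 0)
    (z1 z2 : EuclideanSpace ℝ (Fin n)) (hz1 : ‖z1‖ = 1) (hz2 : ‖z2‖ = 1)
    (hlt : stabRadiusAt M z1 < stabRadiusAt M z2) :
    ∀ x ∈ {x : EuclideanSpace ℝ (Fin n) | ∃ lam > (0 : ℝ),
        ∃ w ∈ closure (OMinus M z1) ∩ closure (OPlus M z2), x = lam • w},
      ¬ ContinuousAt (fun y => stabRadiusAt M y) x := by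
  intro x hx hcont
  obtain ⟨lam, hlam, w, ⟨hw1, hw2⟩, hxw⟩ := hx
  subst hxw
  have hMne : M.Nonempty := by
    rcases Set.eq_empty_or_nonempty M with h | h
    · exfalso
      have hz : ∀ z : EuclideanSpace ℝ (Fin n), stabRadiusAt M z = 0 := by
        intro z
        rw [stabRadiusAt_eq]
        have he : Sset M z = ∅ := by
          ext l
          simp only [Set.mem_empty_iff_false, iff_false]
          rintro ⟨-, x, -, hxt, -⟩
          obtain ⟨A, hA, -⟩ := hxt 0
          rw [h] at hA
          exact hA
        rw [he, Real.sInf_empty]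
      rw [hz z1, hz z2] at hlt
      exact lt_irrefl 0 hlt
    · exact h
  have hlamne : lam ≠ 0 := ne_of_gt hlam
  obtain ⟨p, hpmem, hplim⟩ := mem_closure_iff_seq_limit.mp hw1
  obtain ⟨q, hqmem, hqlim⟩ := mem_closure_iff_seq_limit.mp hw2
  have hT1 : Filter.Tendsto (fun i => lam • p i) Filter.atTop (nhds (lam • w)) :=
    hplim.const_smul lam
  have hT2 : Filter.Tendsto (fun i => lam • q i) Filter.atTop (nhds (lam • w)) :=
    hqlim.const_smul lam
  have hF1 : Filter.Tendsto (fun i => stabRadiusAt M (lam • p i)) Filter.atTop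
      (nhds (stabRadiusAt M (lam • w))) := hcont.tendsto.comp hT1
  have hF2 : Filter.Tendsto (fun i => stabRadiusAt M (lam • q i)) Filter.atTop
      (nhds (stabRadiusAt M (lam • w))) := hcont.tendsto.comp hT2
  have hle : stabRadiusAt M (lam • w) ≤ stabRadiusAt M z1 :=
    le_of_tendsto hF1 (Filter.Eventually.of_forall (fun i => by
      rw [stabRadiusAt_smul M _ hlamne]
      exact stab_le_of_OMinus hM hMne hz1 (hpmem i)))
  have hge : stabRadiusAt M z2 ≤ stabRadiusAt M (lam • w) :=
    ge_of_tendsto hF2 (Filter.Eventually.of_forall (fun i => by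
      rw [stabRadiusAt_smul M _ hlamne]
      exact stab_ge_of_OPlus hM hMne hz2 (hqmem i)))
  linarith
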